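/- arXiv:1706.04186 — 6 statements merged into one kernel-verified Lean document; each statement's English description precedes it below -/
import Mathlib

section
/- If a, b, c are positive integers that are pairwise coprime and a^(2k+1) + b^(2k+1) = c^(2k+1) for some natural number k, then a + b, c - a, and c - b are pairwise coprime. -/
theorem stmt_1 (a b c k : ℕ) (ha : 0 < a) (hb : 0 < b) (hc : 0 < c)
    (hab : Nat.Coprime a b) (hbc : Nat.Coprime b c) (hac : Nat.Coprime a c)
    (h : a ^ (2 * k + 1) + b ^ (2 * k + 1) = c ^ (2 * k + 1)) :
    Nat.Coprime (a + b) (c - a) ∧ Nat.Coprime (a + b) (c - b) ∧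
      Nat.Coprime (c - a) (c - b) := by
  set n := 2 * k + 1 with hn
  have hodd : Odd n := ⟨k, by omega⟩
  have habc : a + b ∣ c ^ n := h ▸ hodd.nat_add_dvd_pow_add_pow a b
  have hca : c - a ∣ b ^ n := by
    have heq : c ^ n - a ^ n = b ^ n := by omega
    exact Nat.sub_dvd_pow_sub_pow c a n |>.trans (by rw [heq])
  have hcb : c - b ∣ a ^ n := by
    have heq : c ^ n - b ^ n = a ^ n := by omega
    exact Nat.sub_dvd_pow_sub_pow c b n |>.trans (by rw [heq])
  refine ⟨?_, ?_, ?_⟩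
  · exact Nat.Coprime.coprime_dvd_right hca
      (Nat.Coprime.coprime_dvd_left habc (hbc.symm.pow n n))
  · exact Nat.Coprime.coprime_dvd_right hcb
      (Nat.Coprime.coprime_dvd_left habc (hac.symm.pow n n))
  · exact Nat.Coprime.coprime_dvd_right hcb
      (Nat.Coprime.coprime_dvd_left hca (hab.pow n n).symm)
end

section
/- For integers a and b and natural number k ≥ 1, the quotient (a^(2k+1) + b^(2k+1))/(a+b) is congruent to (2k+1) * a^(2k) modulo (a+b); equivalently, (a^(2k+1) + b^(2k+1))/(a+b) ≡ (2k+1) b^(2k) (mod a+b). -/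
lemma aux_pow (c x : ℤ) : ∀ n : ℕ, ∃ m : ℤ,
    (c + x) ^ (n + 1) = x ^ (n + 1) + (n + 1) * c * x ^ n + c ^ 2 * m := by
  intro n
  induction n with
  | zero => exact ⟨0, by ring⟩
  | succ n ih =>
    obtain ⟨m, hm⟩ := ih
    refine ⟨(n + 1) * x ^ n + m * (c + x), ?_⟩
    have : (c + x) ^ (n + 2) = (c + x) * (c + x) ^ (n + 1) := by ring
    rw [this, hm]
    push_cast
    ring

lemma key (a b : ℤ) (k : ℕ) : ∃ m : ℤ,
    a ^ (2 * k + 1) + b ^ (2 * k + 1)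
      = (2 * k + 1) * (a + b) * a ^ (2 * k) + (a + b) ^ 2 * m := by
  obtain ⟨m, hm⟩ := aux_pow (a + b) (-a) (2 * k)
  refine ⟨m, ?_⟩
  have hb : b = (a + b) + (-a) := by ring
  have h1 : (-a) ^ (2 * k + 1) = -(a ^ (2 * k + 1)) := by
    rw [Odd.neg_pow ⟨k, by ring⟩]
  have h2 : (-a) ^ (2 * k) = a ^ (2 * k) := by
    rw [Even.neg_pow ⟨k, by ring⟩]
  rw [hb, hm, h1, h2]
  push_cast
  ring

theorem stmt_3 (a b : ℤ) (k : ℕ) (hk : 1 ≤ k) (hab : a + b ≠ 0) (q : ℤ)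
    (hq : a ^ (2 * k + 1) + b ^ (2 * k + 1) = (a + b) * q) :
    q ≡ (2 * k + 1) * a ^ (2 * k) [ZMOD (a + b)] ∧
      q ≡ (2 * k + 1) * b ^ (2 * k) [ZMOD (a + b)] := by
  have main : ∀ x y : ℤ, x + y ≠ 0 → x ^ (2 * k + 1) + y ^ (2 * k + 1) = (x + y) * q →
      q ≡ (2 * k + 1) * x ^ (2 * k) [ZMOD (x + y)] := by
    intro x y hne hxy
    obtain ⟨m, hm⟩ := key x y k
    rw [Int.modEq_iff_dvd]
    refine ⟨-m, ?_⟩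
    have hc : (x + y) * (q - (2 * k + 1) * x ^ (2 * k)) = (x + y) * ((x + y) * m) := by
      rw [hxy] at hm
      push_cast at hm ⊢
      nlinarith [hm]
    have := mul_left_cancel₀ hne hc
    linarith [this]
  constructor
  · exact main a b hab hq
  · have := main b a (by rwa [add_comm]) (by linear_combination hq)
    rwa [add_comm b a] at this
end

section
/- Let p be an odd prime and a, b coprime positive integers with p not dividing a + b. If a^p + b^p = c^p for a positive integer c, then there exist coprime positive integers c1, c2 with a + b = c1^p, (a^p + b^p)/(a+b) = c2^p, and c = c1 * c2. -/
theorem stmt_5 (p a b c : ℕ) (hp : p.Prime) (hodd : Odd p)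
    (ha : 0 < a) (hb : 0 < b) (hc : 0 < c) (hab : Nat.Coprime a b)
    (hndvd : ¬ p ∣ a + b) (h : a ^ p + b ^ p = c ^ p) :
    ∃ c1 c2 : ℕ, 0 < c1 ∧ 0 < c2 ∧ Nat.Coprime c1 c2 ∧
      a + b = c1 ^ p ∧ (a ^ p + b ^ p) / (a + b) = c2 ^ p ∧ c = c1 * c2 := by
  have hs0 : 0 < a + b := by positivity
  have hdvd : (a + b) ∣ a ^ p + b ^ p := Odd.nat_add_dvd_pow_add_pow a b hodd
  set q := (a ^ p + b ^ p) / (a + b) with hqdef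
  have hsq : (a + b) * q = a ^ p + b ^ p := Nat.mul_div_cancel' hdvd
  -- the geometric sum over ℤ
  set S : ℤ := ∑ i ∈ Finset.range p, (a : ℤ) ^ i * (-(b : ℤ)) ^ (p - 1 - i) with hS
  have hSs : S * ((a : ℤ) + b) = (a : ℤ) ^ p + (b : ℤ) ^ p := by
    have := geom_sum₂_mul (a : ℤ) (-(b : ℤ)) p
    rwa [hodd.neg_pow, sub_neg_eq_add, sub_neg_eq_add] at this
  have hqS : (q : ℤ) = S := by
    have h1 : ((a : ℤ) + b) * q = ((a : ℤ) + b) * S := by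
      rw [mul_comm _ S, hSs]
      exact_mod_cast hsq
    have h2 : ((a : ℤ) + b) ≠ 0 := by positivity
    exact mul_left_cancel₀ h2 h1
  have hevens : Even (p - 1) := Nat.Odd.sub_odd hodd odd_one
  -- key congruence : (a+b) ∣ S - p * b^(p-1)
  have key : ((a : ℤ) + b) ∣ S - (p : ℤ) * (b : ℤ) ^ (p - 1) := by
    have hterm : ∀ i ∈ Finset.range p,
        (a : ℤ) ^ i * (-(b : ℤ)) ^ (p - 1 - i) -
          ((a : ℤ) ^ i - (-(b : ℤ)) ^ i) * (-(b : ℤ)) ^ (p - 1 - i)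
        = (b : ℤ) ^ (p - 1) := by
      intro i hi
      rw [Finset.mem_range] at hi
      have : (-(b : ℤ)) ^ i * (-(b : ℤ)) ^ (p - 1 - i) = (-(b : ℤ)) ^ (p - 1) := by
        rw [← pow_add]
        congr 1
        omega
      rw [sub_mul, sub_sub_cancel, this, hevens.neg_pow]
    have hsum : ∑ i ∈ Finset.range p,
        ((a : ℤ) ^ i * (-(b : ℤ)) ^ (p - 1 - i) -
          ((a : ℤ) ^ i - (-(b : ℤ)) ^ i) * (-(b : ℤ)) ^ (p - 1 - i))
        = (p : ℤ) * (b : ℤ) ^ (p - 1) := by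
      rw [Finset.sum_congr rfl hterm, Finset.sum_const, Finset.card_range, nsmul_eq_mul]
    rw [Finset.sum_sub_distrib] at hsum
    have hrw : S - (p : ℤ) * (b : ℤ) ^ (p - 1) =
        ∑ i ∈ Finset.range p, ((a : ℤ) ^ i - (-(b : ℤ)) ^ i) * (-(b : ℤ)) ^ (p - 1 - i) := by
      rw [hS]; linarith
    rw [hrw]
    refine Finset.dvd_sum fun i _ => dvd_mul_of_dvd_left ?_ _
    have := sub_dvd_pow_sub_pow (a : ℤ) (-(b : ℤ)) i
    rwa [sub_neg_eq_add] at this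
  -- the gcd divides p
  have hd : Nat.gcd (a + b) q ∣ p := by
    set d := Nat.gcd (a + b) q with hddef
    have hd1 : (d : ℤ) ∣ (a : ℤ) + b := by
      exact_mod_cast Int.natCast_dvd_natCast.mpr (Nat.gcd_dvd_left _ _)
    have hd2 : (d : ℤ) ∣ S := hqS ▸ Int.natCast_dvd_natCast.mpr (Nat.gcd_dvd_right _ _)
    have hd3 : (d : ℤ) ∣ (p : ℤ) * (b : ℤ) ^ (p - 1) := by
      have := dvd_sub hd2 (dvd_trans hd1 key)
      simpa using this
    have hd4 : d ∣ p * b ^ (p - 1) := by exact_mod_cast hd3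
    have hcopdb : Nat.Coprime d b := by
      have habb : Nat.Coprime (a + b) b := Nat.coprime_add_self_left.mpr hab
      exact Nat.Coprime.coprime_dvd_left (Nat.gcd_dvd_left _ _) habb
    exact (Nat.Coprime.dvd_of_dvd_mul_right (hcopdb.pow_right _) hd4)
  have hcop : Nat.Coprime (a + b) q := by
    rcases (Nat.dvd_prime hp).mp hd with h1 | h1
    · exact h1
    · exact absurd (h1 ▸ Nat.gcd_dvd_left (a + b) q) hndvd
  -- split into p-th powers
  rw [h] at hsq
  obtain ⟨c1, hc1⟩ : ∃ d : ℕ, a + b = d ^ p :=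
    exists_eq_pow_of_mul_eq_pow (Nat.isUnit_iff.mpr hcop) hsq
  obtain ⟨c2, hc2⟩ : ∃ d : ℕ, q = d ^ p :=
    exists_eq_pow_of_mul_eq_pow (Nat.isUnit_iff.mpr hcop.symm) (by rwa [mul_comm] at hsq)
  have hq0 : 0 < q := by
    rcases Nat.eq_zero_or_pos q with h0 | h0
    · rw [h0, mul_zero] at hsq
      exact absurd hsq.symm (by positivity)
    · exact h0
  have hc10 : 0 < c1 := by
    rcases Nat.eq_zero_or_pos c1 with h0 | h0
    · rw [h0, zero_pow hp.pos.ne'] at hc1; omega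
    · exact h0
  have hc20 : 0 < c2 := by
    rcases Nat.eq_zero_or_pos c2 with h0 | h0
    · rw [h0, zero_pow hp.pos.ne'] at hc2; omega
    · exact h0
  have hcc : c = c1 * c2 := by
    have : (c1 * c2) ^ p = c ^ p := by
      rw [mul_pow, ← hc1, ← hc2]; exact hsq
    exact (Nat.pow_left_injective hp.pos.ne' this).symm
  refine ⟨c1, c2, hc10, hc20, ?_, hc1, hc2, hcc⟩
  have hcp : Nat.Coprime (c1 ^ p) (c2 ^ p) := hc1 ▸ hc2 ▸ hcop
  exact (Nat.coprime_pow_left_iff hp.pos _ _).mp ((Nat.coprime_pow_right_iff hp.pos _ _).mp hcp)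
end

section
/- Let a, b, c be pairwise coprime positive integers with a even, b and c odd, and a^(2k) + b^(2k) = c^(2k) for some k ≥ 1. Then there exist coprime positive integers A1, A2 with c^k - b^k = 2^(2k-1) * A1^(2k) and c^k + b^k = 2 * A2^(2k) (up to swapping the powers of 2), and a = 2 * A1 * A2. -/
lemma aux_13 (P Q a n : ℕ) (hn : 1 ≤ n) (hP : 0 < P)
    (hq : ∃ q, Q = 2 * q ∧ Odd q) (hco : Nat.gcd P Q ∣ 2)
    (hPQ : P * Q = a ^ (2 * n)) :
    ∃ A1 A2 : ℕ, 0 < A1 ∧ 0 < A2 ∧ Nat.Coprime A1 A2 ∧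
      P = 2 ^ (2 * n - 1) * A1 ^ (2 * n) ∧ Q = 2 * A2 ^ (2 * n) ∧
      a = 2 * A1 * A2 := by
  obtain ⟨q, hQ, hqodd⟩ := hq
  have hqP : Nat.Coprime q P := by
    have h1 : Nat.gcd q P ∣ Nat.gcd P Q := by
      refine Nat.dvd_gcd (Nat.gcd_dvd_right q P) ?_
      exact (Nat.gcd_dvd_left q P).trans ⟨2, by omega⟩
    have h2 : Nat.gcd q P ∣ 2 := h1.trans hco
    have h3 : Nat.gcd q P ∣ q := Nat.gcd_dvd_left q P
    rcases (Nat.dvd_prime Nat.prime_two).mp h2 with h | h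
    · exact h
    · exfalso
      rw [h] at h3
      obtain ⟨m, hm⟩ := h3
      obtain ⟨t, ht⟩ := hqodd
      omega
  have key : q * (2 * P) = a ^ (2 * n) := by rw [← hPQ, hQ]; ring
  have hcoq : Nat.Coprime q (2 * P) := by
    refine Nat.Coprime.mul_right ?_ hqP
    refine Nat.coprime_comm.mp ((Nat.Prime.coprime_iff_not_dvd Nat.prime_two).mpr ?_)
    rcases hqodd with ⟨t, ht⟩
    omega
  obtain ⟨A2, hA2⟩ := exists_eq_pow_of_mul_eq_pow (isUnit_of_dvd_one (show Nat.gcd q (2 * P) ∣ 1 by rw [hcoq])) key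
  have key' : (2 * P) * q = a ^ (2 * n) := by rw [← key]; ring
  obtain ⟨B, hB⟩ := exists_eq_pow_of_mul_eq_pow
    (isUnit_of_dvd_one (show Nat.gcd (2 * P) q ∣ 1 by rw [Nat.gcd_comm, hcoq])) key'
  have hBeven : 2 ∣ B := by
    refine Nat.Prime.dvd_of_dvd_pow Nat.prime_two (n := 2 * n) ?_
    rw [← hB]; exact ⟨P, rfl⟩
  obtain ⟨A1, hA1⟩ := hBeven
  have hpow : 2 ^ (2 * n) = 2 * 2 ^ (2 * n - 1) := by
    have h' : 2 * n - 1 + 1 = 2 * n := by omega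
    calc 2 ^ (2 * n) = 2 ^ (2 * n - 1 + 1) := by rw [h']
      _ = 2 ^ (2 * n - 1) * 2 := pow_succ 2 _
      _ = 2 * 2 ^ (2 * n - 1) := mul_comm _ _
  have hPval : P = 2 ^ (2 * n - 1) * A1 ^ (2 * n) := by
    have : 2 * P = 2 * (2 ^ (2 * n - 1) * A1 ^ (2 * n)) := by
      rw [hB, hA1, mul_pow, hpow]; ring
    omega
  have hA1pos : 0 < A1 := by
    rcases Nat.eq_zero_or_pos A1 with h | h
    · subst h
      rw [zero_pow (by omega : 2 * n ≠ 0), mul_zero] at hPval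
      omega
    · exact h
  have hA2pos : 0 < A2 := by
    rcases Nat.eq_zero_or_pos A2 with h | h
    · subst h
      rcases hqodd with ⟨t, ht⟩
      rw [zero_pow (by omega : 2 * n ≠ 0)] at hA2
      omega
    · exact h
  have hcoA : Nat.Coprime A1 A2 := by
    have h1 : Nat.Coprime (A1 ^ (2 * n)) (A2 ^ (2 * n)) := by
      rw [← hA2]
      exact Nat.Coprime.coprime_dvd_left ⟨2 ^ (2 * n - 1), by rw [hPval]; ring⟩ hqP.symm
    have h2n : 0 < 2 * n := by omega
    rw [Nat.coprime_pow_left_iff h2n, Nat.coprime_pow_right_iff h2n] at h1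
    exact h1
  refine ⟨A1, A2, hA1pos, hA2pos, hcoA, hPval, by rw [hQ, hA2], ?_⟩
  have : a ^ (2 * n) = (2 * A1 * A2) ^ (2 * n) := by
    rw [← hPQ, hPval, hQ, hA2, mul_pow, mul_pow, hpow]; ring
  exact Nat.pow_left_injective (by omega) this

theorem stmt_13 (a b c k : ℕ) (ha : 0 < a) (hb : 0 < b) (hc : 0 < c)
    (hk : 1 ≤ k) (hab : Nat.Coprime a b) (hbc : Nat.Coprime b c)
    (hac : Nat.Coprime a c) (haeven : Even a) (hbodd : Odd b) (hcodd : Odd c)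
    (h : a ^ (2 * k) + b ^ (2 * k) = c ^ (2 * k)) :
    ∃ A1 A2 : ℕ, 0 < A1 ∧ 0 < A2 ∧ Nat.Coprime A1 A2 ∧
      ((c ^ k - b ^ k = 2 ^ (2 * k - 1) * A1 ^ (2 * k) ∧
          c ^ k + b ^ k = 2 * A2 ^ (2 * k)) ∨
        (c ^ k - b ^ k = 2 * A1 ^ (2 * k) ∧
          c ^ k + b ^ k = 2 ^ (2 * k - 1) * A2 ^ (2 * k))) ∧
      a = 2 * A1 * A2 := by
  have hklt : b ^ k < c ^ k := by
    have hbc2 : b ^ (2 * k) < c ^ (2 * k) := by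
      have : 0 < a ^ (2 * k) := Nat.pow_pos ha
      omega
    have : b < c := (Nat.pow_lt_pow_iff_left (by omega)).mp hbc2
    exact Nat.pow_lt_pow_left this (by omega)
  set P := c ^ k - b ^ k with hPdef
  set Q := c ^ k + b ^ k with hQdef
  have hock : Odd (c ^ k) := hcodd.pow
  have hobk : Odd (b ^ k) := hbodd.pow
  have hsq : ∀ x : ℕ, x ^ (2 * k) = (x ^ k) ^ 2 := fun x => by
    rw [← pow_mul, mul_comm]
  have hPQ : P * Q = a ^ (2 * k) := by
    have h1 : (c ^ k) ^ 2 - (b ^ k) ^ 2 = (c ^ k + b ^ k) * (c ^ k - b ^ k) :=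
      Nat.sq_sub_sq _ _
    have h2 : (b ^ k) ^ 2 ≤ (c ^ k) ^ 2 := Nat.pow_le_pow_left (le_of_lt hklt) 2
    have h3 : a ^ (2 * k) = (c ^ k) ^ 2 - (b ^ k) ^ 2 := by
      rw [← hsq, ← hsq]; omega
    rw [h3, h1]; ring
  have hPpos : 0 < P := by omega
  have hgcd : Nat.gcd P Q ∣ 2 := by
    have hd1 : Nat.gcd P Q ∣ 2 * c ^ k := by
      have : P + Q = 2 * c ^ k := by omega
      exact this ▸ Nat.dvd_add (Nat.gcd_dvd_left P Q) (Nat.gcd_dvd_right P Q)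
    have hd2 : Nat.gcd P Q ∣ 2 * b ^ k := by
      have hsub : Q - P = 2 * b ^ k := by omega
      exact hsub ▸ Nat.dvd_sub (Nat.gcd_dvd_right P Q) (Nat.gcd_dvd_left P Q)
    have : Nat.gcd (2 * b ^ k) (2 * c ^ k) = 2 := by
      have h4 : Nat.gcd (b ^ k) (c ^ k) = 1 := Nat.Coprime.pow k k hbc
      rw [Nat.gcd_mul_left, h4, mul_one]
    exact this ▸ Nat.dvd_gcd hd2 hd1
  obtain ⟨cb, hcb⟩ := hock
  obtain ⟨bb, hbb⟩ := hobk
  -- P = 2p, Q = 2q, p + q = c^k odd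
  have hPeven : ∃ p, P = 2 * p := ⟨cb - bb, by omega⟩
  have hQeven : ∃ q, Q = 2 * q := ⟨cb + bb + 1, by omega⟩
  obtain ⟨p, hp⟩ := hPeven
  obtain ⟨q, hq⟩ := hQeven
  have hpq : p + q = c ^ k := by omega
  rcases Nat.even_or_odd q with hqe | hqo
  · -- q even, so p odd : second disjunct (with roles of P, Q swapped)
    have hpodd : Odd p := by
      rcases hqe with ⟨t, ht⟩
      exact ⟨cb - t, by omega⟩
    have hgcd' : Nat.gcd Q P ∣ 2 := by rwa [Nat.gcd_comm]
    have hQPprod : Q * P = a ^ (2 * k) := by rw [← hPQ]; ring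
    obtain ⟨B2, B1, hB2, hB1, hco, hQval, hPval, ha'⟩ :=
      aux_13 Q P a k hk (by omega) ⟨p, hp, hpodd⟩ hgcd' hQPprod
    exact ⟨B1, B2, hB1, hB2, hco.symm, Or.inr ⟨hPval, hQval⟩, by rw [ha']; ring⟩
  · obtain ⟨A1, A2, h1, h2, h3, h4, h5, h6⟩ :=
      aux_13 P Q a k hk hPpos ⟨q, hq, hqo⟩ hgcd hPQ
    exact ⟨A1, A2, h1, h2, h3, Or.inl ⟨h4, h5⟩, h6⟩
end

section
/- For integers a, b and k ≥ 1, the alternating sum a^(2k) - a^(2k-1) b + a^(2k-2) b^2 - ... + b^(2k) can be written as a polynomial in (a+b)^2 and ab of the form (a+b)^(2k) + q1*(a+b)^(2k-2)*(ab) + ... + q_{k-1}*(a+b)^2*(ab)^(k-1) + (2k+1)*(-ab)^k for suitable integers q1, ..., q_{k-1}; in particular, (a^(2k+1)+b^(2k+1))/(a+b) ≡ (2k+1)*(-ab)^k (mod (a+b)^2). -/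
open Finset

private def cc : ℕ → ℕ → ℤ
  | 0, 0 => 1
  | 0, _+1 => 0
  | 1, 0 => 1
  | 1, 1 => -3
  | 1, _+2 => 0
  | _+2, 0 => 1
  | k+2, 1 => cc (k+1) 1 - 2 * cc (k+1) 0
  | k+2, j+2 => cc (k+1) (j+2) - 2 * cc (k+1) (j+1) - cc k j

private lemma cc_zero : ∀ k, cc k 0 = 1
  | 0 => rfl
  | 1 => rfl
  | _+2 => rfl

private lemma cc_vanish : ∀ k j, k < j → cc k j = 0 := by
  intro k
  induction k using Nat.twoStepInduction with
  | zero => intro j hj; match j, hj with | j+1, _ => rfl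
  | one => intro j hj; match j, hj with | j+2, _ => rfl
  | more k ih1 ih2 =>
    intro j hj
    match j, hj with
    | j+2, hj =>
      show cc (k+1) (j+2) - 2 * cc (k+1) (j+1) - cc k j = 0
      rw [ih2 (j+2) (by omega), ih2 (j+1) (by omega), ih1 j (by omega)]
      ring

private lemma cc_last : ∀ k : ℕ, cc k k = (2*(k:ℤ)+1) * (-1)^k := by
  intro k
  induction k using Nat.twoStepInduction with
  | zero => norm_num [cc]
  | one => norm_num [cc]
  | more k ih1 ih2 =>
    show cc (k+1) (k+2) - 2 * cc (k+1) (k+1) - cc k k = _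
    rw [cc_vanish (k+1) (k+2) (by omega), ih1, ih2]
    push_cast
    ring

private def g2 (k : ℕ) (a b : ℤ) : ℕ → ℤ
  | 0 => 0
  | j+1 => 2 * cc (k+1) j * (a+b)^(2*(k+1-j)) * (a*b)^(j+1)

private def g3 (k : ℕ) (a b : ℤ) : ℕ → ℤ
  | 0 => 0
  | 1 => 0
  | j+2 => cc k j * (a+b)^(2*(k-j)) * (a*b)^(j+2)

private lemma key_s15 : ∀ (k : ℕ) (a b : ℤ),
    (a+b) * ∑ j ∈ range (k+1), cc k j * (a+b)^(2*(k-j)) * (a*b)^j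
      = a^(2*k+1) + b^(2*k+1) := by
  intro k
  induction k using Nat.twoStepInduction with
  | zero => intro a b; simp [cc]
  | one =>
    intro a b
    simp [Finset.sum_range_succ, cc]
    ring
  | more k ih0 ih1 =>
    intro a b
    have hsplit : ∀ j, cc (k+2) j * (a+b)^(2*(k+2-j)) * (a*b)^j
        = cc (k+1) j * (a+b)^(2*(k+2-j)) * (a*b)^j - g2 k a b j - g3 k a b j := by
      intro j
      match j with
      | 0 => simp [g2, g3, cc_zero]
      | 1 =>
        show (cc (k+1) 1 - 2 * cc (k+1) 0) * _ * _ = _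
        simp only [g2, g3]
        have : k + 2 - 1 = k + 1 - 0 := by omega
        rw [this]
        ring
      | j+2 =>
        show (cc (k+1) (j+2) - 2 * cc (k+1) (j+1) - cc k j) * _ * _ = _
        simp only [g2, g3]
        have e1 : 2*(k+2-(j+2)) = 2*(k-j) := by omega
        have e2 : 2*(k+1-(j+1)) = 2*(k-j) := by omega
        rw [e1, e2]
        ring
    have hG1 : ∑ j ∈ range (k+3), cc (k+1) j * (a+b)^(2*(k+2-j)) * (a*b)^j
        = (a+b)^2 * ∑ j ∈ range (k+2), cc (k+1) j * (a+b)^(2*(k+1-j)) * (a*b)^j := by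
      rw [Finset.sum_range_succ, cc_vanish (k+1) (k+2) (by omega), Finset.mul_sum]
      simp only [zero_mul]
      rw [add_zero]
      apply Finset.sum_congr rfl
      intro j hj
      simp only [mem_range] at hj
      rw [show 2*(k+2-j) = 2 + 2*(k+1-j) by omega, pow_add]
      ring
    have hG2 : ∑ j ∈ range (k+3), g2 k a b j
        = 2*(a*b) * ∑ j ∈ range (k+2), cc (k+1) j * (a+b)^(2*(k+1-j)) * (a*b)^j := by
      rw [Finset.sum_range_succ' (g2 k a b) (k+2)]
      show (∑ j ∈ range (k+2), 2 * cc (k+1) j * (a+b)^(2*(k+1-j)) * (a*b)^(j+1)) + 0 = _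
      rw [add_zero, Finset.mul_sum]
      apply Finset.sum_congr rfl
      intro j hj
      rw [pow_succ]
      ring
    have hG3 : ∑ j ∈ range (k+3), g3 k a b j
        = (a*b)^2 * ∑ j ∈ range (k+1), cc k j * (a+b)^(2*(k-j)) * (a*b)^j := by
      rw [Finset.sum_range_succ' (g3 k a b) (k+2)]
      show (∑ j ∈ range (k+2), g3 k a b (j+1)) + 0 = _
      rw [add_zero, Finset.sum_range_succ' (fun j => g3 k a b (j+1)) (k+1)]
      show (∑ j ∈ range (k+1), cc k j * (a+b)^(2*(k-j)) * (a*b)^(j+2)) + 0 = _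
      rw [add_zero, Finset.mul_sum]
      apply Finset.sum_congr rfl
      intro j hj
      rw [pow_add]
      ring
    have hsum : ∑ j ∈ range (k+3), cc (k+2) j * (a+b)^(2*(k+2-j)) * (a*b)^j
        = ((a+b)^2 - 2*(a*b)) * (∑ j ∈ range (k+2), cc (k+1) j * (a+b)^(2*(k+1-j)) * (a*b)^j)
          - (a*b)^2 * ∑ j ∈ range (k+1), cc k j * (a+b)^(2*(k-j)) * (a*b)^j := by
      calc ∑ j ∈ range (k+3), cc (k+2) j * (a+b)^(2*(k+2-j)) * (a*b)^j
          = ∑ j ∈ range (k+3), (cc (k+1) j * (a+b)^(2*(k+2-j)) * (a*b)^j - g2 k a b j - g3 k a b j) :=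
            Finset.sum_congr rfl (fun j _ => hsplit j)
        _ = (∑ j ∈ range (k+3), cc (k+1) j * (a+b)^(2*(k+2-j)) * (a*b)^j)
              - (∑ j ∈ range (k+3), g2 k a b j) - (∑ j ∈ range (k+3), g3 k a b j) := by
            rw [Finset.sum_sub_distrib, Finset.sum_sub_distrib]
        _ = _ := by rw [hG1, hG2, hG3]; ring
    have h1 := ih1 a b
    have h0 := ih0 a b
    rw [show k+2+1 = k+3 from rfl, hsum]
    have expand : (a+b) * (((a+b)^2 - 2*(a*b)) * (∑ j ∈ range (k+2), cc (k+1) j * (a+b)^(2*(k+1-j)) * (a*b)^j)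
          - (a*b)^2 * ∑ j ∈ range (k+1), cc k j * (a+b)^(2*(k-j)) * (a*b)^j)
        = ((a+b)^2 - 2*(a*b)) * ((a+b) * ∑ j ∈ range (k+2), cc (k+1) j * (a+b)^(2*(k+1-j)) * (a*b)^j)
          - (a*b)^2 * ((a+b) * ∑ j ∈ range (k+1), cc k j * (a+b)^(2*(k-j)) * (a*b)^j) := by ring
    rw [expand, h1, h0, show 2*(k+2)+1 = (2*k+1)+4 by omega, show 2*(k+1)+1 = (2*k+1)+2 by omega,
      pow_add, pow_add, pow_add, pow_add, pow_add, pow_add]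
    ring

theorem stmt_15 (a b : ℤ) (k : ℕ) (hk : 1 ≤ k) (hab : a + b ≠ 0) :
    (∃ q : ℕ → ℤ,
      (∑ i ∈ Finset.range (2 * k + 1), (-1 : ℤ) ^ i * a ^ (2 * k - i) * b ^ i) =
        (a + b) ^ (2 * k) +
          (∑ i ∈ Finset.range (k - 1),
            q i * (a + b) ^ (2 * k - 2 * (i + 1)) * (a * b) ^ (i + 1)) +
          (2 * k + 1) * (-(a * b)) ^ k) ∧
    ∀ Q : ℤ, a ^ (2 * k + 1) + b ^ (2 * k + 1) = (a + b) * Q →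
      Q ≡ (2 * k + 1) * (-(a * b)) ^ k [ZMOD (a + b) ^ 2] := by
  obtain ⟨m, rfl⟩ : ∃ m, k = m + 1 := ⟨k - 1, by omega⟩
  set k := m + 1 with hkdef
  have hkey := key_s15 k a b
  -- E = the big expression
  set E := ∑ j ∈ range (k+1), cc k j * (a+b)^(2*(k-j)) * (a*b)^j with hE
  -- split E
  have hEsplit : E = (a + b) ^ (2 * k) +
      (∑ i ∈ Finset.range (k - 1),
        cc k (i+1) * (a + b) ^ (2 * k - 2 * (i + 1)) * (a * b) ^ (i + 1)) +
      (2 * (k:ℤ) + 1) * (-(a * b)) ^ k := by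
    rw [hE, Finset.sum_range_succ, cc_last, Nat.sub_self, mul_zero, pow_zero, mul_one]
    rw [Finset.sum_range_succ' _ m]
    have h0 : cc k 0 * (a+b)^(2*(k-0)) * (a*b)^0 = (a+b)^(2*k) := by
      rw [cc_zero]; simp
    rw [h0]
    have hmid : ∑ j ∈ range m, cc k (j+1) * (a+b)^(2*(k-(j+1))) * (a*b)^(j+1)
        = ∑ i ∈ Finset.range (k-1), cc k (i+1) * (a + b) ^ (2 * k - 2 * (i + 1)) * (a * b) ^ (i + 1) := by
      rw [show k - 1 = m by omega]
      apply Finset.sum_congr rfl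
      intro j hj
      simp only [mem_range] at hj
      rw [show 2*(k-(j+1)) = 2*k - 2*(j+1) by omega]
    rw [hmid]
    have hlast : ((2*(k:ℤ)+1) * (-1)^k) * (a*b)^k = (2*(k:ℤ)+1) * (-(a*b))^k := by
      rw [neg_pow]; ring
    rw [hlast]
    ring
  -- alternating sum equals E
  have hAlt : (a + b) * (∑ i ∈ Finset.range (2 * k + 1), (-1 : ℤ) ^ i * a ^ (2 * k - i) * b ^ i)
      = a^(2*k+1) + b^(2*k+1) := by
    have hg := geom_sum₂_mul (-b) a (2*k+1)
    have hs : ∑ i ∈ range (2*k+1), (-b)^i * a^(2*k+1-1-i)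
        = ∑ i ∈ Finset.range (2 * k + 1), (-1 : ℤ) ^ i * a ^ (2 * k - i) * b ^ i := by
      apply Finset.sum_congr rfl
      intro i hi
      rw [show 2*k+1-1-i = 2*k-i by omega, neg_pow]
      ring
    rw [hs] at hg
    have hodd : (-b : ℤ)^(2*k+1) = -(b^(2*k+1)) := Odd.neg_pow ⟨k, by ring⟩ b
    rw [hodd] at hg
    linear_combination -hg
  have hSE : (∑ i ∈ Finset.range (2 * k + 1), (-1 : ℤ) ^ i * a ^ (2 * k - i) * b ^ i) = E :=
    mul_left_cancel₀ hab (hAlt.trans hkey.symm)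
  constructor
  · exact ⟨fun i => cc k (i+1), by rw [hSE, hEsplit]⟩
  · intro Q hQ
    have hQE : Q = E := mul_left_cancel₀ hab (hQ.symm.trans hkey.symm)
    have hdvd : (a+b)^2 ∣ (a + b) ^ (2 * k) +
        (∑ i ∈ Finset.range (k - 1),
          cc k (i+1) * (a + b) ^ (2 * k - 2 * (i + 1)) * (a * b) ^ (i + 1)) := by
      apply dvd_add
      · exact pow_dvd_pow _ (by omega)
      · apply Finset.dvd_sum
        intro i hi
        simp only [mem_range] at hi
        have : (a+b)^2 ∣ (a+b)^(2*k - 2*(i+1)) := pow_dvd_pow _ (by omega)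
        exact (this.mul_left _).mul_right _
    have hmod : (a + b) ^ (2 * k) +
        (∑ i ∈ Finset.range (k - 1),
          cc k (i+1) * (a + b) ^ (2 * k - 2 * (i + 1)) * (a * b) ^ (i + 1)) ≡ 0 [ZMOD (a+b)^2] :=
      Int.modEq_zero_iff_dvd.mpr hdvd
    have : Q ≡ 0 + (2*(k:ℤ)+1) * (-(a*b))^k [ZMOD (a+b)^2] := by
      rw [hQE, hEsplit]
      exact hmod.add_right _
    rw [zero_add] at this
    exact this
end

section
/- Let p = 2k+1 be an odd prime and a, b, c pairwise coprime positive integers with a^p + b^p = c^p, and suppose p does not divide a*b*c. Then there exist positive integers a1, a2, b1, b2, c1, c2 with a = a1*a2, b = b1*b2, c = c1*c2, a + b = c1^p, c - a = b1^p, and c - b = a1^p. -/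
lemma keyZ (p : ℕ) (hp : p.Prime) (hodd : Odd p) (x y z : ℤ)
    (hxy : IsCoprime x y) (h : x ^ p + y ^ p = z ^ p)
    (hz : ¬ (p : ℤ) ∣ z) (hpos : 0 < x + y) :
    ∃ u : ℤ, 0 < u ∧ u ∣ z ∧ x + y = u ^ p := by
  set S : ℤ := ∑ i ∈ Finset.range p, x ^ i * (-y) ^ (p - 1 - i) with hS
  have hfac : (x + y) * S = z ^ p := by
    have h1 := geom_sum₂_mul x (-y) p
    rw [hodd.neg_pow] at h1
    rw [← h]
    rw [sub_neg_eq_add, sub_neg_eq_add] at h1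
    linarith [h1]
  have hcop : IsCoprime (x + y) S := by
    rw [Int.isCoprime_iff_gcd_eq_one]
    by_contra hne
    obtain ⟨q, hq, hqd⟩ := Nat.exists_prime_and_dvd hne
    have hq1 : (q : ℤ) ∣ x + y :=
      dvd_trans (Int.natCast_dvd_natCast.mpr hqd) (Int.gcd_dvd_left _ _)
    have hq2 : (q : ℤ) ∣ S :=
      dvd_trans (Int.natCast_dvd_natCast.mpr hqd) (Int.gcd_dvd_right _ _)
    have hqz : (q : ℤ) ∣ z := by
      have hd : (q : ℤ) ∣ z ^ p := hfac ▸ hq1.mul_right S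
      exact (Int.prime_iff_natAbs_prime.mpr (by simpa using hq)).dvd_of_dvd_pow hd
    haveI : Fact q.Prime := ⟨hq⟩
    have h0 : (x : ZMod q) + (y : ZMod q) = 0 := by
      have := (ZMod.intCast_zmod_eq_zero_iff_dvd (x + y) q).mpr hq1
      push_cast at this; exact this
    have hS0 : ((S : ℤ) : ZMod q) = 0 := (ZMod.intCast_zmod_eq_zero_iff_dvd S q).mpr hq2
    have hyx : (-(y : ℤ) : ZMod q) = (x : ZMod q) := by
      exact neg_eq_of_add_eq_zero_left h0
    have hsum : ((S : ℤ) : ZMod q) = (p : ZMod q) * (x : ZMod q) ^ (p - 1) := by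
      rw [hS]
      push_cast
      rw [show (-(y : ZMod q)) = (x : ZMod q) from hyx]
      calc ∑ i ∈ Finset.range p, (x : ZMod q) ^ i * (x : ZMod q) ^ (p - 1 - i)
          = ∑ _i ∈ Finset.range p, (x : ZMod q) ^ (p - 1) := by
            refine Finset.sum_congr rfl fun i hi => ?_
            rw [← pow_add]
            congr 1
            have := Finset.mem_range.mp hi
            omega
        _ = (p : ZMod q) * (x : ZMod q) ^ (p - 1) := by
            rw [Finset.sum_const, Finset.card_range, nsmul_eq_mul]
    rw [hS0] at hsum
    rcases mul_eq_zero.mp hsum.symm with hcase | hcase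
    · have hqp : q ∣ p := (ZMod.natCast_eq_zero_iff p q).mp hcase
      have : q = p := (Nat.prime_dvd_prime_iff_eq hq hp).mp hqp
      exact hz (this ▸ hqz)
    · have hqx : (q : ℤ) ∣ x := by
        have : (x : ZMod q) = 0 := pow_eq_zero_iff (by
          have := hp.two_le; omega) |>.mp hcase
        exact (ZMod.intCast_zmod_eq_zero_iff_dvd x q).mp this
      have hqy : (q : ℤ) ∣ y := (dvd_add_right hqx).mp hq1
      obtain ⟨u, v, huv⟩ := hxy
      have : (q : ℤ) ∣ 1 := huv ▸ dvd_add (hqx.mul_left u) (hqy.mul_left v)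
      have := Int.le_of_dvd one_pos this
      have := hq.two_le
      omega
  -- extract the p-th power
  have hgcd : IsUnit (gcd (x + y) S) := by
    rw [← Int.coe_gcd, Int.isCoprime_iff_gcd_eq_one.mp hcop, Int.ofNat_one]
    exact isUnit_one
  obtain ⟨d, u, hu⟩ := exists_associated_pow_of_mul_eq_pow hgcd hfac
  have hpow : x + y = d ^ p ∨ x + y = (-d) ^ p := by
    rcases Int.units_eq_one_or u with h1 | h1 <;> rw [h1] at hu
    · left; simpa using hu.symm
    · right; rw [hodd.neg_pow]; simpa using hu.symm
  have key : ∀ e : ℤ, x + y = e ^ p → ∃ u : ℤ, 0 < u ∧ u ∣ z ∧ x + y = u ^ p := by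
    intro e he
    have hepos : 0 < e := by
      by_contra hneg
      push_neg at hneg
      have := hodd.pow_nonpos hneg
      rw [← he] at this
      linarith
    have hdvd : e ^ p ∣ z ^ p := he ▸ ⟨S, hfac.symm⟩
    exact ⟨e, hepos, (Int.pow_dvd_pow_iff hp.pos.ne').mp hdvd, he⟩
  rcases hpow with he | he
  · exact key d he
  · exact key (-d) he

theorem stmt_16 (p a b c : ℕ) (hp : p.Prime) (hodd : Odd p)
    (ha : 0 < a) (hb : 0 < b) (hc : 0 < c)
    (hab : Nat.Coprime a b) (hbc : Nat.Coprime b c) (hac : Nat.Coprime a c)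
    (h : a ^ p + b ^ p = c ^ p) (hnd : ¬ p ∣ a * b * c) :
    ∃ a1 a2 b1 b2 c1 c2 : ℕ,
      0 < a1 ∧ 0 < a2 ∧ 0 < b1 ∧ 0 < b2 ∧ 0 < c1 ∧ 0 < c2 ∧
      a = a1 * a2 ∧ b = b1 * b2 ∧ c = c1 * c2 ∧
      a + b = c1 ^ p ∧ c - a = b1 ^ p ∧ c - b = a1 ^ p := by
  have hpa : ¬ p ∣ a := fun hd => hnd ((hd.mul_right b).mul_right c)
  have hpb : ¬ p ∣ b := fun hd => hnd ((hd.mul_left a).mul_right c)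
  have hpc : ¬ p ∣ c := fun hd => hnd (hd.mul_left (a * b))
  have hac' : a < c := by
    rw [← Nat.pow_lt_pow_iff_left hp.pos.ne' (n := p)]
    calc a ^ p < a ^ p + b ^ p := by have := pow_pos hb p; omega
      _ = c ^ p := h
  have hbc' : b < c := by
    rw [← Nat.pow_lt_pow_iff_left hp.pos.ne' (n := p)]
    calc b ^ p < a ^ p + b ^ p := by have := pow_pos ha p; omega
      _ = c ^ p := h
  have hZ : (a : ℤ) ^ p + (b : ℤ) ^ p = (c : ℤ) ^ p := by exact_mod_cast h
  -- extraction helper: from ℤ result to ℕ data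
  have conv : ∀ (u : ℤ) (m : ℕ), 0 < u → u ∣ (m : ℤ) → 0 < m →
      ∃ m1 m2 : ℕ, 0 < m1 ∧ 0 < m2 ∧ m = m1 * m2 ∧ (m1 : ℤ) = u := by
    intro u m hu hdvd hm
    lift u to ℕ using hu.le with n hn
    have hdn : n ∣ m := Int.natCast_dvd_natCast.mp hdvd
    exact ⟨n, m / n, by exact_mod_cast hu, Nat.div_pos (Nat.le_of_dvd hm hdn)
      (by exact_mod_cast hu), (Nat.mul_div_cancel' hdn).symm, rfl⟩
  -- c1 : a + b = c1 ^ p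
  obtain ⟨u, hu, huz, hue⟩ := keyZ p hp hodd a b c
    (Nat.isCoprime_iff_coprime.mpr hab) hZ
    (fun hd => hpc (Int.natCast_dvd_natCast.mp (by exact_mod_cast hd))) (by exact_mod_cast Nat.add_pos_left ha b)
  obtain ⟨c1, c2, hc1, hc2, hcc, hc1u⟩ := conv u c hu huz hc
  -- b1 : c - a = b1 ^ p
  obtain ⟨v, hv, hvz, hve⟩ := keyZ p hp hodd c (-(a : ℤ)) b
    ((Nat.isCoprime_iff_coprime.mpr hac).symm.neg_right) (by rw [hodd.neg_pow]; linarith) 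
    (fun hd => hpb (Int.natCast_dvd_natCast.mp (by exact_mod_cast hd)))
    (by simp; exact_mod_cast hac')
  obtain ⟨b1, b2, hb1, hb2, hbb, hb1v⟩ := conv v b hv hvz hb
  -- a1 : c - b = a1 ^ p
  obtain ⟨w, hw, hwz, hwe⟩ := keyZ p hp hodd c (-(b : ℤ)) a
    ((Nat.isCoprime_iff_coprime.mpr hbc).symm.neg_right) (by rw [hodd.neg_pow]; linarith)
    (fun hd => hpa (Int.natCast_dvd_natCast.mp (by exact_mod_cast hd)))
    (by simp; exact_mod_cast hbc')
  obtain ⟨a1, a2, ha1, ha2, haa, ha1w⟩ := conv w a hw hwz ha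
  refine ⟨a1, a2, b1, b2, c1, c2, ha1, ha2, hb1, hb2, hc1, hc2, haa, hbb, hcc, ?_, ?_, ?_⟩
  · have : ((a + b : ℕ) : ℤ) = (c1 : ℤ) ^ p := by push_cast; rw [hc1u]; exact_mod_cast hue
    exact_mod_cast this
  · have : ((c - a : ℕ) : ℤ) = (b1 : ℤ) ^ p := by
      rw [Nat.cast_sub hac'.le, hb1v]
      rw [← hve]; ring
    exact_mod_cast this
  · have : ((c - b : ℕ) : ℤ) = (a1 : ℤ) ^ p := by
      rw [Nat.cast_sub hbc'.le, ha1w]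
      rw [← hwe]; ring
    exact_mod_cast this
end
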